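/- Let q be a prime power, let F_q be a finite field with q elements, and let n, k, δ, α be positive integers with 1 < k < n, 1 ≤ δ ≤ n − k, and 2 ≤ α ≤ [k+δ−1 choose k]_q + 1. Then B_q(n,k,δ;α) ≤ ⌊(α − 1) · [n choose δ+k−1]_q / [n−k choose δ−1]_q⌋. -/

import Mathlib

open scoped Classical

/-- The Gaussian (q-ary) binomial coefficient `[m choose j]_q`,
`∏_{i=0}^{j-1} (q^{m-i} - 1) / (q^{j-i} - 1)` (the quotient is exact). -/
def gaussBinom (q m j : ℕ) : ℕ :=
  (∏ i ∈ Finset.range j, (q ^ (m - i) - 1)) / ∏ i ∈ Finset.range j, (q ^ (j - i) - 1)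

/-- `C` is an `a`-`(n,k,d)^c_q` covering Grassmannian code: a set of
`k`-dimensional subspaces of `F^n` such that every `a` distinct codewords
span a subspace of dimension at least `d + k`. -/
def IsCoveringCode (F : Type*) [Field F] (n k d a : ℕ)
    (C : Finset (Submodule F (Fin n → F))) : Prop :=
  (∀ V ∈ C, Module.finrank F V = k) ∧
  ∀ S ⊆ C, S.card = a → d + k ≤ Module.finrank F ↥(S.sup id)

/-- `Bq F n k d a` is the maximum cardinality of an `a`-`(n,k,d)^c_q`
covering Grassmannian code (no repeated codewords). -/
noncomputable def Bq (F : Type*) [Field F] (n k d a : ℕ) : ℕ :=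
  sSup {m | ∃ C : Finset (Submodule F (Fin n → F)), IsCoveringCode F n k d a C ∧ C.card = m}

/-! ### Auxiliary lemmas -/

open Module Submodule

lemma gaussBinom_pos {q m j : ℕ} (hq : 2 ≤ q) (hj : j ≤ m) : 0 < gaussBinom q m j := by
  have hPj : 0 < ∏ i ∈ Finset.range j, (q ^ (j - i) - 1) := by
    apply Finset.prod_pos
    intro i hi
    have h2 : 2 ≤ q ^ (j - i) :=
      le_trans hq (Nat.le_self_pow (by have := Finset.mem_range.1 hi; omega) q)
    omega
  rw [gaussBinom, Nat.lt_iff_add_one_le, zero_add, Nat.one_le_div_iff hPj]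
  apply Finset.prod_le_prod (fun _ _ => Nat.zero_le _)
  intro i hi
  exact Nat.sub_le_sub_right (Nat.pow_le_pow_right (by omega) (by omega)) 1

lemma prod_sub_pow_eq (q m j : ℕ) (hj : j ≤ m) :
    ∏ i ∈ Finset.range j, (q ^ m - q ^ i)
      = q ^ (∑ i ∈ Finset.range j, i) * ∏ i ∈ Finset.range j, (q ^ (m - i) - 1) := by
  rw [← Finset.prod_pow_eq_pow_sum, ← Finset.prod_mul_distrib]
  refine Finset.prod_congr rfl fun i hi => ?_
  have him : i ≤ m := le_trans (Finset.mem_range.1 hi).le hj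
  rw [Nat.mul_sub, mul_one, ← pow_add, Nat.add_sub_cancel' him]

section Count
variable {F V : Type*} [Field F] [Fintype F] [AddCommGroup V] [Module F V] [Finite V]

/-- The fiber of the "span" map over a `j`-dimensional subspace `W` is equivalent to
the set of independent `j`-tuples in `W`. -/
noncomputable def fiberEquiv (j : ℕ) (W : Submodule F V) (hW : finrank F W = j) :
    {x : {s : Fin j → V // LinearIndependent F s} // span F (Set.range x.1) = W}
      ≃ {t : Fin j → W // LinearIndependent F t} where
  toFun x := ⟨fun i => ⟨x.1.1 i,
      by have h := subset_span (R := F) (s := Set.range x.1.1) ⟨i, rfl⟩; rwa [x.2] at h⟩,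
    LinearIndependent.of_comp W.subtype (by convert x.1.2; rfl)⟩
  invFun t := ⟨⟨W.subtype ∘ t.1, t.2.map' W.subtype W.ker_subtype⟩, by
    rw [Set.range_comp, ← Submodule.map_span]
    have htop : span F (Set.range t.1) = ⊤ := by
      apply Submodule.eq_top_of_finrank_eq
      rw [finrank_span_eq_card t.2, Fintype.card_fin, hW]
    rw [htop, Submodule.map_top, Submodule.range_subtype]⟩
  left_inv x := by ext i; rfl
  right_inv t := by ext i; rfl

/-- The number of `j`-dimensional subspaces of an `m`-dimensional space over `F_q`
is the Gaussian binomial coefficient `[m choose j]_q`. -/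
lemma count_subspaces (j : ℕ) (hj : j ≤ finrank F V) :
    Nat.card {W : Submodule F V // finrank F W = j}
      = gaussBinom (Fintype.card F) (finrank F V) j := by
  classical
  haveI : Fintype V := Fintype.ofFinite V
  haveI : Fintype (Submodule F V) := Fintype.ofFinite _
  set q := Fintype.card F with hqdef
  set m := finrank F V with hmdef
  have hsp : ∀ s : {s : Fin j → V // LinearIndependent F s},
      finrank F (span F (Set.range s.1)) = j := fun s => by
    rw [finrank_span_eq_card s.2, Fintype.card_fin]
  let f : {s : Fin j → V // LinearIndependent F s} → {W : Submodule F V // finrank F W = j} :=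
    fun s => ⟨span F (Set.range s.1), hsp s⟩
  have key : Nat.card {s : Fin j → V // LinearIndependent F s}
      = Nat.card {W : Submodule F V // finrank F W = j}
        * ∏ i ∈ Finset.range j, (q ^ j - q ^ i) := by
    rw [Nat.card_congr (Equiv.sigmaFiberEquiv f).symm, Nat.card_eq_fintype_card,
      Fintype.card_sigma]
    have hfib : ∀ W : {W : Submodule F V // finrank F W = j},
        Fintype.card {x // f x = W} = ∏ i ∈ Finset.range j, (q ^ j - q ^ i) := by
      intro W
      have e1 : {x // f x = W} ≃ {t : Fin j → W.1 // LinearIndependent F t} :=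
        (Equiv.subtypeEquivRight fun x => by simp [f, Subtype.ext_iff]).trans
          (fiberEquiv j W.1 W.2)
      rw [← Nat.card_eq_fintype_card, Nat.card_congr e1,
        card_linearIndependent W.2.ge, W.2,
        Fin.prod_univ_eq_prod_range (fun i => q ^ j - q ^ i) j]
    rw [Finset.sum_congr rfl fun W _ => hfib W, Finset.sum_const, Finset.card_univ,
      smul_eq_mul, Nat.card_eq_fintype_card]
  have hq2 : 2 ≤ q := Fintype.one_lt_card
  have hli : Nat.card {s : Fin j → V // LinearIndependent F s}
      = ∏ i ∈ Finset.range j, (q ^ m - q ^ i) := by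
    rw [card_linearIndependent hj, Fin.prod_univ_eq_prod_range (fun i => q ^ m - q ^ i) j]
  rw [hli] at key
  rw [prod_sub_pow_eq q m j hj, prod_sub_pow_eq q j j le_rfl] at key
  have hE : 0 < q ^ (∑ i ∈ Finset.range j, i) := Nat.pow_pos (by omega)
  have key2 : Nat.card {W : Submodule F V // finrank F W = j}
      * ∏ i ∈ Finset.range j, (q ^ (j - i) - 1)
      = ∏ i ∈ Finset.range j, (q ^ (m - i) - 1) := by
    apply Nat.eq_of_mul_eq_mul_left hE
    rw [key]; ring
  have hPj : 0 < ∏ i ∈ Finset.range j, (q ^ (j - i) - 1) := by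
    apply Finset.prod_pos
    intro i hi
    have h2 : 2 ≤ q ^ (j - i) :=
      le_trans hq2 (Nat.le_self_pow (by have := Finset.mem_range.1 hi; omega) q)
    omega
  rw [gaussBinom, ← key2, Nat.mul_div_cancel _ hPj]
end Count

section Quot
variable {F M : Type*} [Field F] [Fintype F] [AddCommGroup M] [Module F M] [Finite M]

lemma finrank_map_mkQ_add (V W : Submodule F M) (hVW : V ≤ W) :
    finrank F (Submodule.map V.mkQ W) + finrank F V = finrank F W := by
  haveI : Finite (M ⧸ V) := Finite.of_surjective _ (Submodule.mkQ_surjective V)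
  have h := LinearMap.finrank_range_add_finrank_ker (V.mkQ.domRestrict W)
  rw [LinearMap.range_domRestrict, LinearMap.ker_domRestrict, Submodule.ker_mkQ] at h
  rwa [LinearEquiv.finrank_eq (Submodule.comapSubtypeEquivOfLe hVW)] at h

/-- Subspaces of dimension `r` containing a fixed subspace `V` correspond to
subspaces of dimension `r - dim V` in the quotient by `V`. -/
noncomputable def interEquiv (V : Submodule F M) (r : ℕ) (hr : finrank F V ≤ r) :
    {W : Submodule F M // V ≤ W ∧ finrank F W = r}
      ≃ {U : Submodule F (M ⧸ V) // finrank F U = r - finrank F V} where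
  toFun W := ⟨Submodule.map V.mkQ W.1, by
    have h := finrank_map_mkQ_add V W.1 W.2.1
    rw [W.2.2] at h; omega⟩
  invFun U := by
    have hle : V ≤ Submodule.comap V.mkQ U.1 := fun x hx => by
      simp only [Submodule.mem_comap, Submodule.mkQ_apply]
      rw [(Submodule.Quotient.mk_eq_zero V).2 hx]; exact U.1.zero_mem
    refine ⟨Submodule.comap V.mkQ U.1, hle, ?_⟩
    have h := finrank_map_mkQ_add V (Submodule.comap V.mkQ U.1) hle
    rw [Submodule.map_comap_eq, Submodule.range_mkQ, top_inf_eq, U.2] at h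
    omega
  left_inv W := Subtype.ext (by
    simp only [Submodule.comap_map_mkQ]
    exact sup_eq_right.2 W.2.1)
  right_inv U := Subtype.ext (by
    show Submodule.map V.mkQ (Submodule.comap V.mkQ U.1) = U.1
    rw [Submodule.map_comap_eq, Submodule.range_mkQ, top_inf_eq])

end Quot

/-- The packing bound for covering Grassmannian codes:
`B_q(n,k,d;a) ≤ ⌊(a-1) · [n choose d+k-1]_q / [n-k choose d-1]_q⌋`. -/
theorem stmt10 (q : ℕ) (hq : IsPrimePow q) (F : Type) [Field F] [Fintype F]
    (hF : Fintype.card F = q) (n k d a : ℕ)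
    (hk : 1 < k) (hkn : k < n) (hd1 : 1 ≤ d) (hd2 : d ≤ n - k)
    (ha1 : 2 ≤ a) (ha2 : a ≤ gaussBinom q (k + d - 1) k + 1) :
    Bq F n k d a ≤ (a - 1) * gaussBinom q n (d + k - 1) / gaussBinom q (n - k) (d - 1) := by
  classical
  subst hF
  have hq2 : 2 ≤ Fintype.card F := Fintype.one_lt_card
  haveI : Fintype (Submodule F (Fin n → F)) := Fintype.ofFinite _
  have hfr : finrank F (Fin n → F) = n := Module.finrank_fin_fun F
  have hD : 0 < gaussBinom (Fintype.card F) (n - k) (d - 1) := gaussBinom_pos hq2 (by omega)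
  have main : ∀ C : Finset (Submodule F (Fin n → F)), IsCoveringCode F n k d a C →
      C.card ≤ (a - 1) * gaussBinom (Fintype.card F) n (d + k - 1)
        / gaussBinom (Fintype.card F) (n - k) (d - 1) := by
    intro C hC
    set T : Finset (Submodule F (Fin n → F))
      := Finset.univ.filter (fun W => finrank F W = d + k - 1) with hT
    have step1 : ∀ V ∈ C, (T.filter fun W => V ≤ W).card
        = gaussBinom (Fintype.card F) (n - k) (d - 1) := by
      intro V hV
      have hfV : finrank F V = k := hC.1 V hV
      haveI : Finite ((Fin n → F) ⧸ V) := Finite.of_surjective _ (Submodule.mkQ_surjective V)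
      have hfq : finrank F ((Fin n → F) ⧸ V) = n - k := by
        have h := Submodule.finrank_quotient_add_finrank V
        rw [hfr, hfV] at h; omega
      have e : {W : Submodule F (Fin n → F) // finrank F W = d + k - 1 ∧ V ≤ W}
          ≃ {U : Submodule F ((Fin n → F) ⧸ V) // finrank F U = (d + k - 1) - finrank F V} :=
        (Equiv.subtypeEquivRight fun W => and_comm).trans
          (interEquiv V (d + k - 1) (by rw [hfV]; omega))
      have h1 : (d + k - 1) - finrank F V = d - 1 := by rw [hfV]; omega
      calc (T.filter fun W => V ≤ W).card
          = Fintype.card {W : Submodule F (Fin n → F) // finrank F W = d + k - 1 ∧ V ≤ W} := by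
            rw [hT, Finset.filter_filter, Fintype.card_subtype]
        _ = Nat.card {U : Submodule F ((Fin n → F) ⧸ V) // finrank F U = d - 1} := by
            rw [← Nat.card_eq_fintype_card, Nat.card_congr e, h1]
        _ = gaussBinom (Fintype.card F) (n - k) (d - 1) := by
            rw [count_subspaces (d - 1) (by rw [hfq]; omega), hfq]
    have step2 : ∀ W ∈ T, (C.filter fun V => V ≤ W).card ≤ a - 1 := by
      intro W hW
      by_contra hcon
      push_neg at hcon
      obtain ⟨S, hS, hScard⟩ := Finset.exists_subset_card_eq (show a ≤ (C.filter fun V => V ≤ W).card by omega)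
      have hSC : S ⊆ C := hS.trans (Finset.filter_subset _ _)
      have h1 := hC.2 S hSC hScard
      have h2 : S.sup (id : Submodule F (Fin n → F) → Submodule F (Fin n → F)) ≤ W :=
        Finset.sup_le fun V hV => (Finset.mem_filter.1 (hS hV)).2
      have h3 : finrank F ↥(S.sup id) ≤ finrank F W := Submodule.finrank_mono h2
      have hWr : finrank F W = d + k - 1 := (Finset.mem_filter.1 hW).2
      omega
    have dc : ∑ V ∈ C, (T.filter fun W => V ≤ W).card
        = ∑ W ∈ T, (C.filter fun V => V ≤ W).card := by
      simp_rw [Finset.card_filter]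
      rw [Finset.sum_comm]
    have lhs : ∑ V ∈ C, (T.filter fun W => V ≤ W).card
        = C.card * gaussBinom (Fintype.card F) (n - k) (d - 1) := by
      rw [Finset.sum_congr rfl step1, Finset.sum_const, smul_eq_mul]
    have rhs : ∑ W ∈ T, (C.filter fun V => V ≤ W).card ≤ T.card * (a - 1) := by
      calc ∑ W ∈ T, (C.filter fun V => V ≤ W).card ≤ ∑ W ∈ T, (a - 1) :=
            Finset.sum_le_sum step2
        _ = T.card * (a - 1) := by rw [Finset.sum_const, smul_eq_mul]
    have hTcard : T.card = gaussBinom (Fintype.card F) n (d + k - 1) := by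
      have h := count_subspaces (F := F) (V := Fin n → F) (d + k - 1) (by rw [hfr]; omega)
      rw [Nat.card_eq_fintype_card, Fintype.card_subtype, hfr] at h
      rw [hT]; exact h
    have key : C.card * gaussBinom (Fintype.card F) (n - k) (d - 1)
        ≤ (a - 1) * gaussBinom (Fintype.card F) n (d + k - 1) := by
      rw [← lhs]
      rw [dc]
      calc ∑ W ∈ T, (C.filter fun V => V ≤ W).card ≤ T.card * (a - 1) := rhs
        _ = (a - 1) * gaussBinom (Fintype.card F) n (d + k - 1) := by
            rw [hTcard, mul_comm]
    exact (Nat.le_div_iff_mul_le hD).2 key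
  apply csSup_le
  · refine ⟨0, ∅, ⟨fun V h => absurd h (Finset.notMem_empty V), fun S hS hcard => ?_⟩, rfl⟩
    rw [Finset.subset_empty.1 hS, Finset.card_empty] at hcard
    omega
  · rintro m ⟨C, hC, rfl⟩
    exact main C hC
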